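/- Let E and F be F*-spaces such that there exists r > 0 with α_F(r) := inf{‖2x‖/‖x‖ : x ∈ F, 0 < ‖2x‖ ≤ r} > 1. Let V : E → F be an isometry (‖V x − V y‖ = ‖x − y‖ for all x, y ∈ E) with V(0) = 0, satisfying 2·V(x) − V(y) ∈ V(E) for all x, y ∈ E. Then V is (real) linear. -/

import Mathlib

/-- An `F`-norm on a real vector space `E`: a non-negative function `‖·‖` such that
(i) `‖x‖ = 0` iff `x = 0`; (ii) `‖a • x‖ = ‖x‖` when `|a| = 1`;
(iii) `‖x + y‖ ≤ ‖x‖ + ‖y‖`; (iv) `‖aₙ • x‖ → 0` whenever `aₙ → 0`;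
(v) `‖a • xₙ‖ → 0` whenever `‖xₙ‖ → 0`.  A real vector space equipped with an
`F`-norm (and the translation-invariant metric `d(x,y) = ‖x - y‖`) is an `F*`-space. -/
structure FNorm (E : Type*) [AddCommGroup E] [Module ℝ E] where
  toFun : E → ℝ
  nonneg : ∀ x, 0 ≤ toFun x
  eq_zero_iff : ∀ x, toFun x = 0 ↔ x = 0
  smul_abs_one : ∀ (a : ℝ) (x : E), |a| = 1 → toFun (a • x) = toFun x
  add_le : ∀ x y, toFun (x + y) ≤ toFun x + toFun y
  tendsto_smul_left : ∀ (x : E) (a : ℕ → ℝ),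
    Filter.Tendsto a Filter.atTop (nhds 0) →
    Filter.Tendsto (fun n => toFun (a n • x)) Filter.atTop (nhds 0)
  tendsto_smul_right : ∀ (a : ℝ) (xs : ℕ → E),
    Filter.Tendsto (fun n => toFun (xs n)) Filter.atTop (nhds 0) →
    Filter.Tendsto (fun n => toFun (a • xs n)) Filter.atTop (nhds 0)

private lemma FNorm.zero' {E : Type*} [AddCommGroup E] [Module ℝ E] (ν : FNorm E) :
    ν.toFun 0 = 0 := (ν.eq_zero_iff 0).2 rfl

private lemma FNorm.neg' {E : Type*} [AddCommGroup E] [Module ℝ E] (ν : FNorm E) (x : E) :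
    ν.toFun (-x) = ν.toFun x := by
  have h := ν.smul_abs_one (-1) x (by norm_num)
  simpa using h

private lemma FNorm.sub_rev {E : Type*} [AddCommGroup E] [Module ℝ E] (ν : FNorm E) (x y : E) :
    ν.toFun (x - y) = ν.toFun (y - x) := by
  rw [← neg_sub y x, ν.neg']

private lemma FNorm.tri {E : Type*} [AddCommGroup E] [Module ℝ E] (ν : FNorm E) (x y z : E) :
    ν.toFun (x - z) ≤ ν.toFun (x - y) + ν.toFun (y - z) := by
  have h := ν.add_le (x - y) (y - z)
  rwa [sub_add_sub_cancel] at h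

private lemma FNorm.pos_of_ne {E : Type*} [AddCommGroup E] [Module ℝ E] (ν : FNorm E) {x : E}
    (hx : x ≠ 0) : 0 < ν.toFun x := by
  rcases lt_or_eq_of_le (ν.nonneg x) with h | h
  · exact h
  · exact absurd ((ν.eq_zero_iff x).1 h.symm) hx

/-- Iterated conjugated reflections used in the Mazur–Ulam style argument. -/
private def iterMap {E : Type*} (Tm σ : E → E) : ℕ → (E → E) × (E → E)
  | 0 => (fun x => σ (Tm x), fun x => Tm (σ x))
  | k+1 =>
    let p := iterMap Tm σ k
    (fun x => Tm (p.2 (Tm (p.1 x))), fun x => p.2 (Tm (p.1 (Tm x))))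

/-- Key local midpoint lemma. -/
private lemma mid_small {E F : Type*} [AddCommGroup E] [Module ℝ E]
    [AddCommGroup F] [Module ℝ F]
    (νE : FNorm E) (νF : FNorm F) (V : E → F) (r α : ℝ)
    (hα1 : 1 < α)
    (hstep : ∀ w : F, w ≠ 0 → νF.toFun ((2:ℝ) • w) ≤ r →
      α * νF.toFun w ≤ νF.toFun ((2:ℝ) • w))
    (hiso : ∀ x y : E, νF.toFun (V x - V y) = νE.toFun (x - y))
    (a b m : E) (hm : (2:ℝ) • m = a + b)
    (Tm : E → E) (hTm : ∀ x, V (Tm x) = (2:ℝ) • V m - V x)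
    (hsmall : 4 * νE.toFun (m - a) ≤ r) :
    V a + V b = (2:ℝ) • V m := by
  classical
  have Vinj : Function.Injective V := by
    intro x y h
    have h2 := hiso x y
    rw [h, sub_self, νF.zero'] at h2
    exact sub_eq_zero.mp ((νE.eq_zero_iff (x - y)).1 h2.symm)
  have hTm_iso : ∀ x y : E, νE.toFun (Tm x - Tm y) = νE.toFun (x - y) := by
    intro x y
    have h1 : νE.toFun (Tm x - Tm y) = νF.toFun (V (Tm x) - V (Tm y)) := (hiso _ _).symm
    rw [hTm, hTm] at h1
    have h2 : ((2:ℝ) • V m - V x) - ((2:ℝ) • V m - V y) = -(V x - V y) := by abel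
    rw [h2, νF.neg', hiso] at h1
    exact h1
  have hTmTm : ∀ x, Tm (Tm x) = x := by
    intro x; apply Vinj; rw [hTm, hTm]; abel
  have hTmm : Tm m = m := by
    apply Vinj; rw [hTm, two_smul]; abel
  set atld := Tm a with hatld
  set σf : E → E := fun x => a + atld - x with hσf
  have hσσ : ∀ x, σf (σf x) = x := by intro x; simp only [hσf]; abel
  have hσ_iso : ∀ x y, νE.toFun (σf x - σf y) = νE.toFun (x - y) := by
    intro x y
    have h : σf x - σf y = -(x - y) := by simp only [hσf]; abel
    rw [h, νE.neg']
  have hσa : σf a = atld := by simp only [hσf]; abel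
  have hσat : σf atld = a := by simp only [hσf]; abel
  have hTmatld : Tm atld = a := by rw [hatld, hTmTm]
  set g := iterMap Tm σf with hg
  have hInv : ∀ k, (∀ x, (g k).2 ((g k).1 x) = x) ∧ (∀ x, (g k).1 ((g k).2 x) = x) ∧
      (∀ x y, νE.toFun ((g k).1 x - (g k).1 y) = νE.toFun (x - y)) ∧
      (g k).1 a = a ∧ (g k).1 atld = atld := by
    intro k
    induction k with
    | zero =>
      refine ⟨?_, ?_, ?_, ?_, ?_⟩
      · intro x; show Tm (σf (σf (Tm x))) = x; rw [hσσ, hTmTm]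
      · intro x; show σf (Tm (Tm (σf x))) = x; rw [hTmTm, hσσ]
      · intro x y
        show νE.toFun (σf (Tm x) - σf (Tm y)) = _
        rw [hσ_iso, hTm_iso]
      · show σf (Tm a) = a
        rw [← hatld, hσat]
      · show σf (Tm atld) = atld
        rw [hTmatld, hσa]
    | succ k ih =>
      obtain ⟨li, ri, iso, fa, fat⟩ := ih
      have iso2 : ∀ x y, νE.toFun ((g k).2 x - (g k).2 y) = νE.toFun (x - y) := by
        intro x y
        have h := iso ((g k).2 x) ((g k).2 y)
        rw [ri, ri] at h
        exact h.symm
      have f2a : (g k).2 a = a := by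
        conv_lhs => rw [← fa]
        rw [li]
      have f2at : (g k).2 atld = atld := by
        conv_lhs => rw [← fat]
        rw [li]
      refine ⟨?_, ?_, ?_, ?_, ?_⟩
      · intro x
        show (g k).2 (Tm ((g k).1 (Tm (Tm ((g k).2 (Tm ((g k).1 x))))))) = x
        rw [hTmTm, ri, hTmTm, li]
      · intro x
        show Tm ((g k).2 (Tm ((g k).1 ((g k).2 (Tm ((g k).1 (Tm x))))))) = x
        rw [ri, hTmTm, li, hTmTm]
      · intro x y
        show νE.toFun (Tm ((g k).2 (Tm ((g k).1 x))) - Tm ((g k).2 (Tm ((g k).1 y)))) = _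
        rw [hTm_iso, iso2, hTm_iso, iso]
      · show Tm ((g k).2 (Tm ((g k).1 a))) = a
        rw [fa, ← hatld, f2at, hTmatld]
      · show Tm ((g k).2 (Tm ((g k).1 atld))) = atld
        rw [fat, hTmatld, f2a, ← hatld]
  -- bound on the displacements
  have hδbound : ∀ k, νE.toFun ((g k).1 m - m) ≤ 2 * νE.toFun (m - a) := by
    intro k
    obtain ⟨li, ri, iso, fa, fat⟩ := hInv k
    have h1 : νE.toFun ((g k).1 m - a) = νE.toFun (m - a) := by
      have h := iso m a
      rw [fa] at h
      exact h
    calc νE.toFun ((g k).1 m - m) ≤ νE.toFun ((g k).1 m - a) + νE.toFun (a - m) :=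
          νE.tri _ a _
      _ = νE.toFun (m - a) + νE.toFun (m - a) := by rw [h1, νE.sub_rev a m]
      _ = 2 * νE.toFun (m - a) := by ring
  -- recurrence
  have hδrec : ∀ k, νE.toFun ((g (k+1)).1 m - m)
      = νF.toFun ((2:ℝ) • (V m - V ((g k).1 m))) := by
    intro k
    obtain ⟨li, ri, iso, fa, fat⟩ := hInv k
    show νE.toFun (Tm ((g k).2 (Tm ((g k).1 m))) - m) = _
    have e1 : νE.toFun (Tm ((g k).2 (Tm ((g k).1 m))) - m)
        = νE.toFun ((g k).2 (Tm ((g k).1 m)) - m) := by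
      have h := hTm_iso ((g k).2 (Tm ((g k).1 m))) m
      rw [hTmm] at h
      exact h
    have e2 : νE.toFun ((g k).2 (Tm ((g k).1 m)) - m)
        = νE.toFun (Tm ((g k).1 m) - (g k).1 m) := by
      have h := iso ((g k).2 (Tm ((g k).1 m))) m
      rw [ri] at h
      exact h.symm
    rw [e1, e2, ← hiso, hTm]
    congr 1
    module
  -- growth gives contradiction unless the first displacement vanishes
  have hδ0 : νE.toFun ((g 0).1 m - m) = 0 := by
    by_contra hne
    have hδ0pos : 0 < νE.toFun ((g 0).1 m - m) :=
      lt_of_le_of_ne (νE.nonneg _) (Ne.symm hne)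
    have hαpos : (0:ℝ) < α := lt_trans one_pos hα1
    have chain : ∀ k, α ^ k * νE.toFun ((g 0).1 m - m) ≤ νE.toFun ((g k).1 m - m) := by
      intro k
      induction k with
      | zero => simp
      | succ k ih =>
        have hk_pos : 0 < νE.toFun ((g k).1 m - m) :=
          lt_of_lt_of_le (mul_pos (pow_pos hαpos k) hδ0pos) ih
        have hwne : V m - V ((g k).1 m) ≠ 0 := by
          intro h
          have h2 : νF.toFun (V m - V ((g k).1 m)) = νE.toFun (m - (g k).1 m) := hiso _ _
          rw [h, νF.zero'] at h2
          have h4 : νE.toFun ((g k).1 m - m) = 0 := by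
            rw [νE.sub_rev]; exact h2.symm
          exact (ne_of_gt hk_pos) h4
        have hFw : νF.toFun (V m - V ((g k).1 m)) = νE.toFun ((g k).1 m - m) := by
          rw [hiso, νE.sub_rev]
        have h2r : νF.toFun ((2:ℝ) • (V m - V ((g k).1 m))) ≤ r := by
          have hle : νF.toFun ((2:ℝ) • (V m - V ((g k).1 m)))
              ≤ 2 * νE.toFun ((g k).1 m - m) := by
            rw [two_smul]
            calc νF.toFun ((V m - V ((g k).1 m)) + (V m - V ((g k).1 m)))
                ≤ νF.toFun (V m - V ((g k).1 m)) + νF.toFun (V m - V ((g k).1 m)) :=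
                  νF.add_le _ _
              _ = 2 * νE.toFun ((g k).1 m - m) := by rw [hFw]; ring
          have hb := hδbound k
          linarith
        have hα := hstep _ hwne h2r
        rw [hFw, ← hδrec k] at hα
        calc α ^ (k+1) * νE.toFun ((g 0).1 m - m)
            = α * (α ^ k * νE.toFun ((g 0).1 m - m)) := by ring
          _ ≤ α * νE.toFun ((g k).1 m - m) :=
              mul_le_mul_of_nonneg_left ih (le_of_lt hαpos)
          _ ≤ _ := hα
    obtain ⟨k, hk⟩ := pow_unbounded_of_one_lt
      ((2 * νE.toFun (m - a)) / νE.toFun ((g 0).1 m - m)) hα1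
    rw [div_lt_iff₀ hδ0pos] at hk
    have h1 := chain k
    have h2 := hδbound k
    linarith
  -- conclude
  have hp0 : (g 0).1 m = a + atld - m := by
    show σf (Tm m) = a + atld - m
    rw [hTmm, hσf]
  have hz : a + atld - m - m = 0 := by
    have h := (νE.eq_zero_iff _).1 hδ0
    rw [hp0] at h
    exact h
  have h3 : a + atld = m + m := by rwa [sub_sub, sub_eq_zero] at hz
  rw [← two_smul ℝ m, hm] at h3
  have hatldb : atld = b := add_left_cancel h3
  have hVb : V b = (2:ℝ) • V m - V a := by
    rw [← hatldb, hatld]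
    exact hTm a
  rw [hVb]
  abel

/-- Midpoint property at all dyadic scales. -/
private lemma mid_k {E F : Type*} [AddCommGroup E] [Module ℝ E]
    [AddCommGroup F] [Module ℝ F]
    (νE : FNorm E) (νF : FNorm F) (V : E → F) (r α : ℝ)
    (hα1 : 1 < α)
    (hstep : ∀ w : F, w ≠ 0 → νF.toFun ((2:ℝ) • w) ≤ r →
      α * νF.toFun w ≤ νF.toFun ((2:ℝ) • w))
    (hiso : ∀ x y : E, νF.toFun (V x - V y) = νE.toFun (x - y))
    (T : E → E → E) (hT : ∀ c x : E, V (T c x) = (2:ℝ) • V c - V x) :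
    ∀ (k : ℕ) (a b : E),
      4 * νE.toFun (((2:ℝ)⁻¹) ^ (k+1) • (b - a)) ≤ r →
      V a + V b = (2:ℝ) • V (((2:ℝ)⁻¹) • (a + b)) := by
  intro k
  induction k with
  | zero =>
    intro a b h
    have hm : (2:ℝ) • (((2:ℝ)⁻¹) • (a + b)) = a + b := by
      rw [smul_smul]; norm_num
    refine mid_small νE νF V r α hα1 hstep hiso a b _ hm
      (T (((2:ℝ)⁻¹) • (a + b))) (hT _) ?_
    have hma : ((2:ℝ)⁻¹) • (a + b) - a = ((2:ℝ)⁻¹) ^ (0+1) • (b - a) := by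
      rw [pow_one]; module
    rw [hma]
    exact h
  | succ k ih =>
    intro a b h
    have hma : ((2:ℝ)⁻¹) • (a + b) - a = ((2:ℝ)⁻¹) • (b - a) := by module
    have hbm : b - ((2:ℝ)⁻¹) • (a + b) = ((2:ℝ)⁻¹) • (b - a) := by module
    have hside : ∀ u v : E, v - u = ((2:ℝ)⁻¹) • (b - a) →
        4 * νE.toFun (((2:ℝ)⁻¹) ^ (k+1) • (v - u)) ≤ r := by
      intro u v huv
      rw [huv, smul_smul, ← pow_succ]
      exact h
    have h1 := ih a (((2:ℝ)⁻¹) • (a + b)) (hside _ _ hma)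
    have h2 := ih (((2:ℝ)⁻¹) • (a + b)) b (hside _ _ hbm)
    have hm12 : ((2:ℝ)⁻¹) • (((2:ℝ)⁻¹) • (a + b) + b)
        - ((2:ℝ)⁻¹) • (a + ((2:ℝ)⁻¹) • (a + b)) = ((2:ℝ)⁻¹) • (b - a) := by
      module
    have h3 := ih (((2:ℝ)⁻¹) • (a + ((2:ℝ)⁻¹) • (a + b)))
      (((2:ℝ)⁻¹) • (((2:ℝ)⁻¹) • (a + b) + b)) (hside _ _ hm12)
    have hmid : ((2:ℝ)⁻¹) • (((2:ℝ)⁻¹) • (a + ((2:ℝ)⁻¹) • (a + b))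
        + ((2:ℝ)⁻¹) • (((2:ℝ)⁻¹) • (a + b) + b)) = ((2:ℝ)⁻¹) • (a + b) := by
      module
    rw [hmid] at h3
    have hsum : V a + V b + ((2:ℝ) • V (((2:ℝ)⁻¹) • (a + b)))
        = (2:ℝ) • V (((2:ℝ)⁻¹) • (a + ((2:ℝ)⁻¹) • (a + b)))
          + (2:ℝ) • V (((2:ℝ)⁻¹) • (((2:ℝ)⁻¹) • (a + b) + b)) := by
      calc V a + V b + ((2:ℝ) • V (((2:ℝ)⁻¹) • (a + b)))
          = (V a + V (((2:ℝ)⁻¹) • (a + b))) + (V (((2:ℝ)⁻¹) • (a + b)) + V b) := by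
            rw [two_smul]; abel
        _ = _ := by rw [h1, h2]
    rw [← smul_add, h3, smul_smul] at hsum
    have h4 : V a + V b = (2 * 2 : ℝ) • V (((2:ℝ)⁻¹) • (a + b))
        - (2:ℝ) • V (((2:ℝ)⁻¹) • (a + b)) := eq_sub_of_add_eq hsum
    rw [h4]
    module

/-- **Corollary 2.4.** Let `E, F` be `F*`-spaces such that for some `r > 0`,
`α_F(r) = inf {‖2x‖/‖x‖ : x ∈ F, 0 < ‖2x‖ ≤ r} > 1`.  Let `V : E → F` be an isometry
(`‖Vx - Vy‖ = ‖x - y‖`) with `V 0 = 0` such that `2·Vx - Vy ∈ V(E)` for all `x, y`.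
Then `V` is linear. -/
theorem linear_of_isometry_fstar
    {E F : Type*} [AddCommGroup E] [Module ℝ E] [AddCommGroup F] [Module ℝ F]
    (νE : FNorm E) (νF : FNorm F)
    (halpha : ∃ r : ℝ, 0 < r ∧
      1 < sInf {t : ℝ | ∃ x : F, 0 < νF.toFun ((2 : ℝ) • x) ∧
        νF.toFun ((2 : ℝ) • x) ≤ r ∧ t = νF.toFun ((2 : ℝ) • x) / νF.toFun x})
    (V : E → F)
    (hV0 : V 0 = 0)
    (hiso : ∀ x y : E, νF.toFun (V x - V y) = νE.toFun (x - y))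
    (hrange : ∀ x y : E, (2 : ℝ) • V x - V y ∈ Set.range V) :
    IsLinearMap ℝ V := by
  classical
  obtain ⟨r, hr, hinf⟩ := halpha
  have hbdd : BddBelow {t : ℝ | ∃ x : F, 0 < νF.toFun ((2 : ℝ) • x) ∧
      νF.toFun ((2 : ℝ) • x) ≤ r ∧ t = νF.toFun ((2 : ℝ) • x) / νF.toFun x} := by
    refine ⟨0, ?_⟩
    rintro t ⟨x, hx1, hx2, rfl⟩
    have h1 := νF.nonneg ((2:ℝ) • x)
    have h2 := νF.nonneg x
    positivity
  set α := sInf {t : ℝ | ∃ x : F, 0 < νF.toFun ((2 : ℝ) • x) ∧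
      νF.toFun ((2 : ℝ) • x) ≤ r ∧ t = νF.toFun ((2 : ℝ) • x) / νF.toFun x} with hαdef
  have hα1 : 1 < α := hinf
  have hstep : ∀ w : F, w ≠ 0 → νF.toFun ((2:ℝ) • w) ≤ r →
      α * νF.toFun w ≤ νF.toFun ((2:ℝ) • w) := by
    intro w hw hler
    have hνw : 0 < νF.toFun w := νF.pos_of_ne hw
    have h2w : (2:ℝ) • w ≠ 0 := by
      intro h
      apply hw
      have : w = (2:ℝ)⁻¹ • ((2:ℝ) • w) := by rw [smul_smul]; norm_num
      rw [this, h, smul_zero]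
    have hν2w : 0 < νF.toFun ((2:ℝ) • w) := νF.pos_of_ne h2w
    have hmem : νF.toFun ((2:ℝ) • w) / νF.toFun w ∈ {t : ℝ | ∃ x : F,
        0 < νF.toFun ((2 : ℝ) • x) ∧ νF.toFun ((2 : ℝ) • x) ≤ r ∧
        t = νF.toFun ((2 : ℝ) • x) / νF.toFun x} := ⟨w, hν2w, hler, rfl⟩
    have hle := csInf_le hbdd hmem
    rw [← hαdef] at hle
    rw [le_div_iff₀ hνw] at hle
    exact hle
  have hTex : ∀ c x : E, ∃ z, V z = (2:ℝ) • V c - V x := fun c x => hrange c x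
  choose T hT using hTex
  -- global midpoint property
  have hmid : ∀ a b : E, V a + V b = (2:ℝ) • V (((2:ℝ)⁻¹) • (a + b)) := by
    intro a b
    have htend0 : Filter.Tendsto (fun k : ℕ => ((2:ℝ)⁻¹) ^ k) Filter.atTop (nhds 0) :=
      tendsto_pow_atTop_nhds_zero_of_lt_one (by norm_num) (by norm_num)
    have htend : Filter.Tendsto (fun k : ℕ => ((2:ℝ)⁻¹) ^ (k+1)) Filter.atTop (nhds 0) := by
      have h := htend0.comp (Filter.tendsto_add_atTop_nat 1)
      exact h
    have hsm := νE.tendsto_smul_left (b - a) _ htend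
    obtain ⟨k, hk⟩ := (hsm.eventually_lt_const (show (0:ℝ) < r/4 by positivity)).exists
    exact mid_k νE νF V r α hα1 hstep hiso T hT k a b (by linarith)
  -- additivity
  have hadd : ∀ x y : E, V (x + y) = V x + V y := by
    intro x y
    have h1 := hmid x y
    have h2 := hmid (x + y) 0
    rw [hV0, add_zero, add_zero] at h2
    rw [h2, ← h1]
  -- ℕ-homogeneity
  have hnat : ∀ (n : ℕ) (x : E), V ((n:ℝ) • x) = (n:ℝ) • V x := by
    intro n x
    induction n with
    | zero => simp [hV0]
    | succ n ih =>
      have hx : ((n+1:ℕ):ℝ) • x = (n:ℝ) • x + x := by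
        push_cast
        rw [add_smul, one_smul]
      rw [hx, hadd, ih]
      push_cast
      rw [add_smul, one_smul]
  have hneg : ∀ x : E, V (-x) = - V x := by
    intro x
    have h := hadd x (-x)
    rw [add_neg_cancel, hV0] at h
    exact eq_neg_of_add_eq_zero_right h.symm
  have hint : ∀ (n : ℤ) (x : E), V ((n:ℝ) • x) = (n:ℝ) • V x := by
    intro n x
    obtain ⟨k⟩ | ⟨k⟩ := n
    · simpa using hnat k x
    · have hc : ((Int.negSucc k : ℤ) : ℝ) = -(((k+1 : ℕ) : ℝ)) := by
        push_cast [Int.negSucc_eq]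
        ring
      rw [hc, neg_smul, hneg, hnat, neg_smul]
  have hrat : ∀ (q : ℚ) (x : E), V ((q:ℝ) • x) = (q:ℝ) • V x := by
    intro q x
    have hden : ((q.den : ℝ)) ≠ 0 := by
      exact_mod_cast q.den_nz
    have hqd : ((q.den:ℝ)) * (q:ℝ) = (q.num:ℝ) := by
      have hq : (q:ℝ) = (q.num:ℝ) / (q.den:ℝ) := by
        exact_mod_cast (Rat.num_div_den q).symm
      rw [hq]
      field_simp
    have key1 : (q.den:ℝ) • ((q:ℝ) • x) = (q.num:ℝ) • x := by rw [smul_smul, hqd]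
    have key2 : (q.den:ℝ) • ((q:ℝ) • V x) = (q.num:ℝ) • V x := by rw [smul_smul, hqd]
    have h3 : (q.den:ℝ) • V ((q:ℝ) • x) = (q.num:ℝ) • V x := by
      rw [← hnat q.den ((q:ℝ) • x), key1, hint]
    have h4 : (q.den:ℝ) • V ((q:ℝ) • x) = (q.den:ℝ) • ((q:ℝ) • V x) := by
      rw [h3, key2]
    have h5 := congrArg (fun z => ((q.den:ℝ))⁻¹ • z) h4
    simpa [smul_smul, inv_mul_cancel₀ hden] using h5
  -- ℝ-homogeneity by continuity
  have hsmul : ∀ (c : ℝ) (x : E), V (c • x) = c • V x := by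
    intro c x
    have hq : ∀ n : ℕ, ∃ q : ℚ, |c - (q:ℝ)| < 1/(n+1) := by
      intro n
      exact exists_rat_near c (by positivity)
    choose q hqn using hq
    have hten : Filter.Tendsto (fun n : ℕ => c - (q n : ℝ)) Filter.atTop (nhds 0) := by
      refine squeeze_zero_norm (fun n => ?_) tendsto_one_div_add_atTop_nhds_zero_nat
      rw [Real.norm_eq_abs]
      exact (hqn n).le
    have hE := νE.tendsto_smul_left x _ hten
    have hF := νF.tendsto_smul_left (V x) _ hten
    have hsum := hE.add hF
    rw [add_zero] at hsum
    have hub : ∀ n, νF.toFun (V (c • x) - c • V x)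
        ≤ νE.toFun ((c - (q n:ℝ)) • x) + νF.toFun ((c - (q n:ℝ)) • V x) := by
      intro n
      have tri := νF.tri (V (c • x)) (V ((q n:ℝ) • x)) (c • V x)
      have e1 : νF.toFun (V (c • x) - V ((q n:ℝ) • x)) = νE.toFun ((c - (q n:ℝ)) • x) := by
        rw [hiso, ← sub_smul]
      have e2 : νF.toFun (V ((q n:ℝ) • x) - c • V x) = νF.toFun ((c - (q n:ℝ)) • V x) := by
        rw [hrat, ← sub_smul,
          show ((q n:ℝ) - c) = -(c - (q n:ℝ)) by ring, neg_smul, νF.neg']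
      rw [e1, e2] at tri
      exact tri
    have hle0 : νF.toFun (V (c • x) - c • V x) ≤ 0 := ge_of_tendsto' hsum hub
    have hz := le_antisymm hle0 (νF.nonneg _)
    exact sub_eq_zero.mp ((νF.eq_zero_iff _).1 hz)
  exact ⟨hadd, hsmul⟩
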